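/- LION-RNN theorem for diagonal decay (Theorem A.4): for k = 1,…,L let a_k ∈ ℝ^d and Λ_k = diag(a_k). Define the forward states S^F_0 = 0 ∈ ℝ^{d×d}, S^F_i = Λ_i S^F_{i−1} + k_i v_i^⊤, the backward states S^B_L = k_L v_L^⊤, S^B_i = Λ_{i+1} S^B_{i+1} + k_i v_i^⊤ for i < L, and the corrected outputs y^F_i = (q_i^⊤ S^F_i)^⊤ − (1/2)⟨q_i, k_i⟩ v_i and y^B_i = (q_i^⊤ S^B_i)^⊤ − (1/2)⟨q_i, k_i⟩ v_i. Then for every i, y^F_i + y^B_i = Σ_{j=1}^{i−1} (q_i^⊤ Λ_i Λ_{i−1} ⋯ Λ_{j+1} k_j) v_j + ⟨q_i, k_i⟩ v_i + Σ_{j=i+1}^{L} (q_i^⊤ Λ_{i+1} ⋯ Λ_j k_j) v_j; in particular the diagonal term ⟨q_i, k_i⟩ v_i is counted exactly once. -/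

import Mathlib

open Matrix Finset

/-- `lamProd a j i = Λ_i Λ_{i-1} ⋯ Λ_{j+1}` where `Λ_t = diag (a t)`;
empty products (when `i ≤ j`) equal the identity. -/
noncomputable def lamProd {d : ℕ} (a : ℕ → Fin d → ℝ) (j : ℕ) :
    ℕ → Matrix (Fin d) (Fin d) ℝ
  | 0 => 1
  | (i + 1) => if i + 1 ≤ j then 1 else Matrix.diagonal (a (i + 1)) * lamProd a j i

lemma lamProd_eq {d : ℕ} (a : ℕ → Fin d → ℝ) (j : ℕ) : ∀ i,
    lamProd a j i = Matrix.diagonal (fun x => ∏ t ∈ Finset.Ioc j i, a t x) := by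
  intro i
  induction i with
  | zero => simp [lamProd, Finset.Ioc_eq_empty_of_le (Nat.zero_le j)]
  | succ i ih =>
    rw [lamProd]
    split_ifs with h
    · rw [Finset.Ioc_eq_empty_of_le h]; simp
    · push_neg at h
      rw [ih, Matrix.diagonal_mul_diagonal]
      have he : (fun x => a (i+1) x * ∏ t ∈ Finset.Ioc j i, a t x)
          = fun x => ∏ t ∈ Finset.Ioc j (i+1), a t x := by
        funext x
        rw [Finset.prod_Ioc_succ_top (Nat.lt_succ_iff.mp h)]
        ring
      rw [he]

lemma lamProd_self {d : ℕ} (a : ℕ → Fin d → ℝ) (i : ℕ) : lamProd a i i = 1 := by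
  rw [lamProd_eq, Finset.Ioc_self]
  simp

lemma lamProd_succ_left {d : ℕ} (a : ℕ → Fin d → ℝ) {i j : ℕ} (h : i < j) :
    Matrix.diagonal (a (i + 1)) * lamProd a (i + 1) j = lamProd a i j := by
  rw [lamProd_eq, lamProd_eq, Matrix.diagonal_mul_diagonal]
  have he : (fun x => a (i+1) x * ∏ t ∈ Finset.Ioc (i+1) j, a t x)
      = fun x => ∏ t ∈ Finset.Ioc i j, a t x := by
    funext x
    have : Finset.Ioc i j = insert (i+1) (Finset.Ioc (i+1) j) := by
      ext t
      simp only [Finset.mem_Ioc, Finset.mem_insert]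
      omega
    rw [this, Finset.prod_insert (by simp)]
  rw [he]

lemma vecMul_mul_vecMulVec {d : ℕ} (x y w : Fin d → ℝ) (M : Matrix (Fin d) (Fin d) ℝ) :
    x ᵥ* (M * vecMulVec y w) = ((x ᵥ* M) ⬝ᵥ y) • w := by
  rw [← Matrix.vecMul_vecMul]
  funext z
  simp [Matrix.vecMul, Matrix.vecMulVec, dotProduct, Finset.sum_mul, mul_assoc]

/-- LION-RNN theorem for diagonal decay: the corrected bidirectional outputs satisfy
`y^F_i + y^B_i = Σ_{j<i} (q_i^⊤ Λ_i ⋯ Λ_{j+1} k_j) v_j + ⟨q_i, k_i⟩ v_i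
+ Σ_{j>i} (q_i^⊤ Λ_{i+1} ⋯ Λ_j k_j) v_j`; in particular the diagonal term is
counted exactly once. -/
theorem lion_rnn_diagonal_decay
    (L d : ℕ) (hL : 0 < L) (hd : 0 < d)
    (q k v : ℕ → (Fin d → ℝ)) (a : ℕ → (Fin d → ℝ))
    (SF SB : ℕ → Matrix (Fin d) (Fin d) ℝ)
    (hSF0 : SF 0 = 0)
    (hSF : ∀ i, 1 ≤ i → i ≤ L →
      SF i = Matrix.diagonal (a i) * SF (i - 1) + vecMulVec (k i) (v i))
    (hSBL : SB L = vecMulVec (k L) (v L))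
    (hSB : ∀ i, 1 ≤ i → i < L →
      SB i = Matrix.diagonal (a (i + 1)) * SB (i + 1) + vecMulVec (k i) (v i))
    (yF yB : ℕ → (Fin d → ℝ))
    (hyF : ∀ i, yF i = q i ᵥ* SF i - ((1 / 2) * (q i ⬝ᵥ k i)) • v i)
    (hyB : ∀ i, yB i = q i ᵥ* SB i - ((1 / 2) * (q i ⬝ᵥ k i)) • v i) :
    ∀ i, 1 ≤ i → i ≤ L →
      yF i + yB i =
        (∑ j ∈ Finset.Icc 1 (i - 1), ((q i ᵥ* lamProd a j i) ⬝ᵥ k j) • v j)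
        + (q i ⬝ᵥ k i) • v i
        + ∑ j ∈ Finset.Icc (i + 1) L, ((q i ᵥ* lamProd a i j) ⬝ᵥ k j) • v j := by
  have hSFc : ∀ i, i ≤ L →
      SF i = ∑ j ∈ Finset.Icc 1 i, lamProd a j i * vecMulVec (k j) (v j) := by
    intro i
    induction i with
    | zero => intro _; simpa using hSF0
    | succ i ih =>
      intro hiL
      rw [hSF (i+1) (by omega) hiL]
      simp only [Nat.add_sub_cancel]
      rw [ih (by omega), Finset.mul_sum,
        Finset.sum_Icc_succ_top (by omega : 1 ≤ i + 1)]
      congr 1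
      · apply Finset.sum_congr rfl
        intro j hj
        rw [← mul_assoc]
        congr 1
        rw [lamProd, if_neg]
        simp only [Finset.mem_Icc] at hj
        omega
      · rw [lamProd_self, one_mul]
  have hSBc : ∀ n i, i + n = L → 1 ≤ i →
      SB i = ∑ j ∈ Finset.Icc i L, lamProd a i j * vecMulVec (k j) (v j) := by
    intro n
    induction n with
    | zero =>
      intro i hi _
      have : i = L := by omega
      subst this
      rw [hSBL, Finset.Icc_self, Finset.sum_singleton, lamProd_self, one_mul]
    | succ n ih =>
      intro i hi h1
      rw [hSB i h1 (by omega), ih (i+1) (by omega) (by omega), Finset.mul_sum]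
      have hsplit : Finset.Icc i L = insert i (Finset.Icc (i+1) L) := by
        ext t; simp only [Finset.mem_Icc, Finset.mem_insert]; omega
      rw [hsplit, Finset.sum_insert (by simp), lamProd_self, one_mul, add_comm]
      congr 1
      apply Finset.sum_congr rfl
      intro j hj
      simp only [Finset.mem_Icc] at hj
      rw [← mul_assoc, lamProd_succ_left a (show i < j by omega)]
  have hdist : ∀ (x : Fin d → ℝ) (s : Finset ℕ) (M : ℕ → Matrix (Fin d) (Fin d) ℝ),
      x ᵥ* (∑ j ∈ s, M j) = ∑ j ∈ s, x ᵥ* M j := by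
    intro x s M
    induction s using Finset.induction with
    | empty => simp
    | insert _ _ h ih => simp [Finset.sum_insert h, Matrix.vecMul_add, ih]
  intro i h1 hiL
  obtain ⟨m, rfl⟩ : ∃ m, i = m + 1 := ⟨i - 1, by omega⟩
  rw [hyF, hyB, hSFc (m+1) hiL, hSBc (L - (m+1)) (m+1) (by omega) h1,
    hdist, hdist]
  simp only [vecMul_mul_vecMulVec, Nat.add_sub_cancel]
  rw [Finset.sum_Icc_succ_top (by omega : 1 ≤ m + 1)]
  have hsplit : Finset.Icc (m+1) L = insert (m+1) (Finset.Icc (m+2) L) := by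
    ext t; simp only [Finset.mem_Icc, Finset.mem_insert]; omega
  rw [hsplit, Finset.sum_insert (by simp), lamProd_self]
  simp only [Matrix.vecMul_one]
  module
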